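/- In a categorical model of type theory, for any dependent projection p_Δ : Γ.Δ → Γ, the pullback functor p_Δ* : C↠Γ → C↠(Γ.Δ) admits a right adjoint, given on objects by sending a dependent projection Γ.Δ.Θ → Γ.Δ to Γ.Π(Δ,Θ) → Γ, with counit constructed from the exchange map and the application map app_{Δ,Θ}, and with the universal property following from the Π-η rule. -/

import Mathlib

open CategoryTheory CategoryTheory.Limits

universe v u

/-- The part of the structure of a categorical model of type theory needed to
state the statement: a class of dependent projections closed under composition
and containing identities, chosen pullbacks of dependent projections along
arbitrary maps, and a `Π`-structure with application `app`, abstraction `lam`,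
and the `β`- and `η`-rules. -/
structure PiModel (C : Type u) [Category.{v} C] where
  /-- dependent projections -/
  DP : MorphismProperty C
  dp_id : ∀ X : C, DP (𝟙 X)
  dp_comp : ∀ {X Y Z : C} (f : X ⟶ Y) (g : Y ⟶ Z), DP f → DP g → DP (f ≫ g)
  /-- chosen pullback `f*E` of a dependent projection `q : E ↠ Γ` along `f` -/
  pbObj : ∀ {Γ' Γ E : C}, (Γ' ⟶ Γ) → ∀ q : E ⟶ Γ, DP q → C
  pbProj : ∀ {Γ' Γ E : C} (f : Γ' ⟶ Γ) (q : E ⟶ Γ) (hq : DP q), pbObj f q hq ⟶ Γ'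
  pbMap : ∀ {Γ' Γ E : C} (f : Γ' ⟶ Γ) (q : E ⟶ Γ) (hq : DP q), pbObj f q hq ⟶ E
  pb_isPullback : ∀ {Γ' Γ E : C} (f : Γ' ⟶ Γ) (q : E ⟶ Γ) (hq : DP q),
    IsPullback (pbProj f q hq) (pbMap f q hq) f q
  pb_dp : ∀ {Γ' Γ E : C} (f : Γ' ⟶ Γ) (q : E ⟶ Γ) (hq : DP q), DP (pbProj f q hq)
  /-- the `Π`-type `Γ.Π(Δ,Θ)` of a dependent projection `p : T ↠ E` over a
  dependent projection `q : E ↠ Γ` -/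
  Pi : ∀ {Γ E T : C} (q : E ⟶ Γ) (p : T ⟶ E), DP q → DP p → C
  PiProj : ∀ {Γ E T : C} (q : E ⟶ Γ) (p : T ⟶ E) (hq : DP q) (hp : DP p),
    Pi q p hq hp ⟶ Γ
  Pi_dp : ∀ {Γ E T : C} (q : E ⟶ Γ) (p : T ⟶ E) (hq : DP q) (hp : DP p),
    DP (PiProj q p hq hp)
  /-- application: `q*(Π(Δ,Θ)) ⟶ Θ` over `E` -/
  app : ∀ {Γ E T : C} (q : E ⟶ Γ) (p : T ⟶ E) (hq : DP q) (hp : DP p),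
    pbObj q (PiProj q p hq hp) (Pi_dp q p hq hp) ⟶ T
  app_over : ∀ {Γ E T : C} (q : E ⟶ Γ) (p : T ⟶ E) (hq : DP q) (hp : DP p),
    app q p hq hp ≫ p = pbProj q (PiProj q p hq hp) (Pi_dp q p hq hp)
  /-- abstraction -/
  lam : ∀ {Γ E T U : C} (q : E ⟶ Γ) (p : T ⟶ E) (hq : DP q) (hp : DP p)
    (u : U ⟶ Γ) (hu : DP u) (h : pbObj q u hu ⟶ T),
    h ≫ p = pbProj q u hu → (U ⟶ Pi q p hq hp)
  lam_over : ∀ {Γ E T U : C} (q : E ⟶ Γ) (p : T ⟶ E) (hq : DP q) (hp : DP p)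
    (u : U ⟶ Γ) (hu : DP u) (h : pbObj q u hu ⟶ T)
    (hcomm : h ≫ p = pbProj q u hu),
    lam q p hq hp u hu h hcomm ≫ PiProj q p hq hp = u
  /-- the `β`-rule: the transpose of `lam h` is `h` -/
  beta : ∀ {Γ E T U : C} (q : E ⟶ Γ) (p : T ⟶ E) (hq : DP q) (hp : DP p)
    (u : U ⟶ Γ) (hu : DP u) (h : pbObj q u hu ⟶ T)
    (hcomm : h ≫ p = pbProj q u hu),
    (pb_isPullback q (PiProj q p hq hp) (Pi_dp q p hq hp)).lift
        (pbProj q u hu) (pbMap q u hu ≫ lam q p hq hp u hu h hcomm)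
        (by rw [Category.assoc, lam_over, (pb_isPullback q u hu).w]) ≫
      app q p hq hp = h
  /-- the `Π`-`η` rule: abstraction is unique -/
  eta : ∀ {Γ E T U : C} (q : E ⟶ Γ) (p : T ⟶ E) (hq : DP q) (hp : DP p)
    (u : U ⟶ Γ) (hu : DP u) (h : pbObj q u hu ⟶ T)
    (hcomm : h ≫ p = pbProj q u hu) (v : U ⟶ Pi q p hq hp)
    (hv : v ≫ PiProj q p hq hp = u),
    (pb_isPullback q (PiProj q p hq hp) (Pi_dp q p hq hp)).lift
        (pbProj q u hu) (pbMap q u hu ≫ v)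
        (by rw [Category.assoc, hv, (pb_isPullback q u hu).w]) ≫
      app q p hq hp = h →
    v = lam q p hq hp u hu h hcomm

variable {C : Type u} [Category.{v} C]

/-- The category of dependent projections over `Γ`. -/
abbrev FibDP (M : PiModel C) (Γ : C) : Type _ :=
  ObjectProperty.FullSubcategory (fun X : Over Γ => M.DP X.hom)

namespace PiModelAux

variable (M : PiModel C) {Γ E : C} (q : E ⟶ Γ) (hq : M.DP q)

@[simp]
lemma FibDP_id_left {Δ : C} (U : FibDP M Δ) : (𝟙 U : U ⟶ U).hom.left = 𝟙 U.obj.left := rfl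

@[simp]
lemma FibDP_comp_left {Δ : C} {U V W : FibDP M Δ} (f : U ⟶ V) (g : V ⟶ W) :
    (f ≫ g).hom.left = f.hom.left ≫ g.hom.left := rfl

lemma pbw {Γ' Γ₀ T : C} (f : Γ' ⟶ Γ₀) (p : T ⟶ Γ₀) (hp : M.DP p) :
    M.pbProj f p hp ≫ f = M.pbMap f p hp ≫ p := (M.pb_isPullback f p hp).w

@[simp]
lemma lift_id {Γ' Γ₀ T : C} (f : Γ' ⟶ Γ₀) (p : T ⟶ Γ₀) (hp : M.DP p)
    (w : M.pbProj f p hp ≫ f = M.pbMap f p hp ≫ p) :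
    (M.pb_isPullback f p hp).lift (M.pbProj f p hp) (M.pbMap f p hp) w = 𝟙 _ := by
  apply (M.pb_isPullback f p hp).hom_ext <;> simp

/-- The pullback functor `q*`. -/
noncomputable def qstar : FibDP M Γ ⥤ FibDP M E where
  obj U := ⟨Over.mk (M.pbProj q U.obj.hom U.property), M.pb_dp q U.obj.hom U.property⟩
  map {U V} f := ObjectProperty.homMk <| Over.homMk
    ((M.pb_isPullback q V.obj.hom V.property).lift
      (M.pbProj q U.obj.hom U.property)
      (M.pbMap q U.obj.hom U.property ≫ f.hom.left)
      (by rw [Category.assoc, Over.w f.hom, (M.pb_isPullback q U.obj.hom U.property).w]))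
    (by simp)
  map_id U := by
    apply ObjectProperty.hom_ext
    apply CategoryTheory.Over.OverMorphism.ext
    apply (M.pb_isPullback q U.obj.hom U.property).hom_ext <;> simp
  map_comp {U V W} f g := by
    apply ObjectProperty.hom_ext
    apply CategoryTheory.Over.OverMorphism.ext
    apply (M.pb_isPullback q W.obj.hom W.property).hom_ext <;> simp

set_option maxHeartbeats 1000000 in
/-- The `Π`-functor, right adjoint to `q*`. -/
noncomputable def piF : FibDP M E ⥤ FibDP M Γ where
  obj Θ := ⟨Over.mk (M.PiProj q Θ.obj.hom hq Θ.property),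
    M.Pi_dp q Θ.obj.hom hq Θ.property⟩
  map {Θ Θ'} g := ObjectProperty.homMk <| Over.homMk
    (M.lam q Θ'.obj.hom hq Θ'.property
      (M.PiProj q Θ.obj.hom hq Θ.property) (M.Pi_dp q Θ.obj.hom hq Θ.property)
      (M.app q Θ.obj.hom hq Θ.property ≫ g.hom.left)
      (by rw [Category.assoc, Over.w g.hom, M.app_over]))
    (by simpa using M.lam_over _ _ _ _ _ _ _ _)
  map_id Θ := by
    apply ObjectProperty.hom_ext
    apply CategoryTheory.Over.OverMorphism.ext
    refine (M.eta q Θ.obj.hom hq Θ.property _ _ _ _ _ (by simp) ?_).symm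
    simp [lift_id M]
  map_comp {Θ Θ' Θ''} g g' := by
    apply ObjectProperty.hom_ext
    apply CategoryTheory.Over.OverMorphism.ext
    refine (M.eta q Θ''.obj.hom hq Θ''.property _ _ _ _ _
      (by simp [M.lam_over]) ?_).symm
    have hfac : (M.pb_isPullback q (M.PiProj q Θ''.obj.hom hq Θ''.property)
        (M.Pi_dp q Θ''.obj.hom hq Θ''.property)).lift
        (M.pbProj q (M.PiProj q Θ.obj.hom hq Θ.property) (M.Pi_dp q Θ.obj.hom hq Θ.property))
        (M.pbMap q (M.PiProj q Θ.obj.hom hq Θ.property) (M.Pi_dp q Θ.obj.hom hq Θ.property) ≫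
          (M.lam q Θ'.obj.hom hq Θ'.property _ (M.Pi_dp q Θ.obj.hom hq Θ.property)
            (M.app q Θ.obj.hom hq Θ.property ≫ g.hom.left)
            (by rw [Category.assoc, Over.w g.hom, M.app_over]) ≫
           M.lam q Θ''.obj.hom hq Θ''.property _ (M.Pi_dp q Θ'.obj.hom hq Θ'.property)
            (M.app q Θ'.obj.hom hq Θ'.property ≫ g'.hom.left)
            (by rw [Category.assoc, Over.w g'.hom, M.app_over])))
        (by rw [Category.assoc, Category.assoc, M.lam_over, M.lam_over,
            pbw M _ _ _]) =
      (M.pb_isPullback q (M.PiProj q Θ'.obj.hom hq Θ'.property)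
        (M.Pi_dp q Θ'.obj.hom hq Θ'.property)).lift
        (M.pbProj q _ (M.Pi_dp q Θ.obj.hom hq Θ.property))
        (M.pbMap q _ (M.Pi_dp q Θ.obj.hom hq Θ.property) ≫
          M.lam q Θ'.obj.hom hq Θ'.property _ (M.Pi_dp q Θ.obj.hom hq Θ.property)
            (M.app q Θ.obj.hom hq Θ.property ≫ g.hom.left)
            (by rw [Category.assoc, Over.w g.hom, M.app_over]))
        (by rw [Category.assoc, M.lam_over, pbw M _ _ _]) ≫
      (M.pb_isPullback q (M.PiProj q Θ''.obj.hom hq Θ''.property)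
        (M.Pi_dp q Θ''.obj.hom hq Θ''.property)).lift
        (M.pbProj q _ (M.Pi_dp q Θ'.obj.hom hq Θ'.property))
        (M.pbMap q _ (M.Pi_dp q Θ'.obj.hom hq Θ'.property) ≫
          M.lam q Θ''.obj.hom hq Θ''.property _ (M.Pi_dp q Θ'.obj.hom hq Θ'.property)
            (M.app q Θ'.obj.hom hq Θ'.property ≫ g'.hom.left)
            (by rw [Category.assoc, Over.w g'.hom, M.app_over]))
        (by rw [Category.assoc, M.lam_over, pbw M _ _ _]) := by
      apply (M.pb_isPullback q _ _).hom_ext <;> simp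
    dsimp only
    simp only [ObjectProperty.homMk_hom, Over.homMk_left, FibDP_comp_left M]
    rw [hfac, Category.assoc, M.beta, ← Category.assoc, M.beta]
    simp

set_option maxHeartbeats 1000000 in
/-- The adjunction `q* ⊣ Π`. -/
noncomputable def adj : qstar M q ⊣ piF M q hq :=
  Adjunction.mkOfHomEquiv
    { homEquiv := fun U Θ =>
        { toFun := fun k => ObjectProperty.homMk <| Over.homMk
            (M.lam q Θ.obj.hom hq Θ.property U.obj.hom U.property k.hom.left
              (Over.w k.hom))
            (by simpa [piF] using M.lam_over _ _ _ _ _ _ _ _)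
          invFun := fun v => ObjectProperty.homMk <| Over.homMk
            ((M.pb_isPullback q (M.PiProj q Θ.obj.hom hq Θ.property)
                (M.Pi_dp q Θ.obj.hom hq Θ.property)).lift
              (M.pbProj q U.obj.hom U.property)
              (M.pbMap q U.obj.hom U.property ≫ v.hom.left)
              (by erw [Category.assoc, show v.hom.left ≫ M.PiProj q Θ.obj.hom hq Θ.property = U.obj.hom from Over.w v.hom,
                  (M.pb_isPullback q U.obj.hom U.property).w]; rfl) ≫
             M.app q Θ.obj.hom hq Θ.property)
            (by
              rw [Category.assoc, M.app_over]
              erw [IsPullback.lift_fst]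
              rfl)
          left_inv := fun k => by
            apply ObjectProperty.hom_ext
            apply CategoryTheory.Over.OverMorphism.ext
            exact M.beta q Θ.obj.hom hq Θ.property U.obj.hom U.property k.hom.left
              (Over.w k.hom)
          right_inv := fun v => by
            apply ObjectProperty.hom_ext
            apply CategoryTheory.Over.OverMorphism.ext
            exact (M.eta q Θ.obj.hom hq Θ.property U.obj.hom U.property _ _ v.hom.left
              (Over.w v.hom) rfl).symm }
      homEquiv_naturality_left_symm := fun {U' U Θ} f g => by
        apply ObjectProperty.hom_ext
        apply CategoryTheory.Over.OverMorphism.ext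
        show _ ≫ M.app q Θ.obj.hom hq Θ.property =
          ((qstar M q).map f ≫ _).hom.left
        have : (M.pb_isPullback q (M.PiProj q Θ.obj.hom hq Θ.property)
            (M.Pi_dp q Θ.obj.hom hq Θ.property)).lift
            (M.pbProj q U'.obj.hom U'.property)
            (M.pbMap q U'.obj.hom U'.property ≫ (f ≫ g).hom.left)
            (by erw [Category.assoc, show (f ≫ g).hom.left ≫ M.PiProj q Θ.obj.hom hq Θ.property = U'.obj.hom from Over.w (f ≫ g).hom,
                (M.pb_isPullback q U'.obj.hom U'.property).w]) =
          ((qstar M q).map f).hom.left ≫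
          (M.pb_isPullback q (M.PiProj q Θ.obj.hom hq Θ.property)
            (M.Pi_dp q Θ.obj.hom hq Θ.property)).lift
            (M.pbProj q U.obj.hom U.property)
            (M.pbMap q U.obj.hom U.property ≫ g.hom.left)
            (by erw [Category.assoc, show g.hom.left ≫ M.PiProj q Θ.obj.hom hq Θ.property = U.obj.hom from Over.w g.hom,
                (M.pb_isPullback q U.obj.hom U.property).w]; rfl) := by
          apply (M.pb_isPullback q _ _).hom_ext <;> simp [qstar, ObjectProperty.homMk_hom] <;> erw [IsPullback.lift_snd_assoc, Category.assoc] <;> rfl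
        exact (congrArg (· ≫ M.app q Θ.obj.hom hq Θ.property) this).trans (Category.assoc _ _ _)
      homEquiv_naturality_right := fun {U Θ Θ'} k g => by
        apply ObjectProperty.hom_ext
        apply CategoryTheory.Over.OverMorphism.ext
        show M.lam q Θ'.obj.hom hq Θ'.property U.obj.hom U.property (k ≫ g).hom.left _ =
          (_ ≫ (piF M q hq).map g).hom.left
        refine (M.eta q Θ'.obj.hom hq Θ'.property U.obj.hom U.property _ _ _
          (by exact Over.w _) ?_).symm
        have hfac : (M.pb_isPullback q (M.PiProj q Θ'.obj.hom hq Θ'.property)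
            (M.Pi_dp q Θ'.obj.hom hq Θ'.property)).lift
            (M.pbProj q U.obj.hom U.property)
            (M.pbMap q U.obj.hom U.property ≫
              (M.lam q Θ.obj.hom hq Θ.property U.obj.hom U.property k.hom.left
                (Over.w k.hom) ≫
               M.lam q Θ'.obj.hom hq Θ'.property _ (M.Pi_dp q Θ.obj.hom hq Θ.property)
                (M.app q Θ.obj.hom hq Θ.property ≫ g.hom.left)
                (by rw [Category.assoc, Over.w g.hom, M.app_over])))
            (by erw [Category.assoc, Category.assoc, M.lam_over, M.lam_over,
                pbw M _ _ _]) =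
          (M.pb_isPullback q (M.PiProj q Θ.obj.hom hq Θ.property)
            (M.Pi_dp q Θ.obj.hom hq Θ.property)).lift
            (M.pbProj q U.obj.hom U.property)
            (M.pbMap q U.obj.hom U.property ≫
              M.lam q Θ.obj.hom hq Θ.property U.obj.hom U.property k.hom.left
                (Over.w k.hom))
            (by erw [Category.assoc, M.lam_over, (M.pb_isPullback q U.obj.hom U.property).w]) ≫
          (M.pb_isPullback q (M.PiProj q Θ'.obj.hom hq Θ'.property)
            (M.Pi_dp q Θ'.obj.hom hq Θ'.property)).lift
            (M.pbProj q _ (M.Pi_dp q Θ.obj.hom hq Θ.property))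
            (M.pbMap q _ (M.Pi_dp q Θ.obj.hom hq Θ.property) ≫
              M.lam q Θ'.obj.hom hq Θ'.property _ (M.Pi_dp q Θ.obj.hom hq Θ.property)
                (M.app q Θ.obj.hom hq Θ.property ≫ g.hom.left)
                (by rw [Category.assoc, Over.w g.hom, M.app_over]))
            (by rw [Category.assoc, M.lam_over, pbw M _ _ _]) := by
          apply (M.pb_isPullback q _ _).hom_ext <;> simp
        have hgoal := congrArg
          (fun x => x ≫ M.app q Θ'.obj.hom hq Θ'.property) hfac
        refine hgoal.trans ?_
        rw [Category.assoc, M.beta, ← Category.assoc]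
        erw [M.beta]
        rfl }

end PiModelAux

/-- In a categorical model of type theory, for any dependent projection
`q : Γ.Δ ↠ Γ`, the pullback functor `q* : C↠Γ ⥤ C↠(Γ.Δ)` admits a right
adjoint, given on objects by sending a dependent projection `Γ.Δ.Θ ↠ Γ.Δ` to
`Γ.Π(Δ,Θ) ↠ Γ` (the universal property following from the `Π`-`η` rule). -/
theorem stmt18 (M : PiModel C) {Γ E : C} (q : E ⟶ Γ) (hq : M.DP q) :
    ∃ qstar : FibDP M Γ ⥤ FibDP M E,
      -- `qstar` is given on objects by pullback along `q`
      (∀ U : FibDP M Γ, ∃ m : (qstar.obj U).obj.left ⟶ U.obj.left,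
        IsPullback (qstar.obj U).obj.hom m q U.obj.hom) ∧
      ∃ R : FibDP M E ⥤ FibDP M Γ,
        -- `R` is given on objects by the `Π`-construction
        (∀ Θ : FibDP M E,
          ∃ h : (R.obj Θ).obj.left = M.Pi q Θ.obj.hom hq Θ.property,
            (R.obj Θ).obj.hom = eqToHom h ≫ M.PiProj q Θ.obj.hom hq Θ.property) ∧
        -- and `R` is right adjoint to `qstar`
        Nonempty (qstar ⊣ R) := by
  refine ⟨PiModelAux.qstar M q,
    fun U => ⟨M.pbMap q U.obj.hom U.property, M.pb_isPullback q U.obj.hom U.property⟩,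
    PiModelAux.piF M q hq,
    fun Θ => ⟨rfl, by erw [eqToHom_refl, Category.id_comp]; rfl⟩,
    ⟨PiModelAux.adj M q hq⟩⟩
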